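/- With harmonic decomposition as above, one has P⊥ dΩ̄ = (Id−κ) dΩ̄ = [dΩ, dΩ]‾, i.e. the antiharmonic part of the space of exact noncommutative forms coincides with the span of graded commutators of exact forms. -/

import Mathlib

set_option maxHeartbeats 1000000

open Polynomial Finset

/-- Bezout identity: if `P(1)` is a unit then `P` is invertible modulo `(X-1)^2`. -/
private lemma my_bezout {k : Type} [CommRing k] (P : Polynomial k) (h : IsUnit (P.eval 1)) :
    ∃ V S : Polynomial k, V * P = 1 + S * (X - 1) ^ 2 := by
  obtain ⟨w, hw⟩ := isUnit_iff_exists_inv'.mp h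
  set Q : Polynomial k := P.comp (X + 1) with hQdef
  have hdvd : (X : Polynomial k) ^ 2 ∣ (Q - C (Q.coeff 0) - C (Q.coeff 1) * X) := by
    rw [Polynomial.X_pow_dvd_iff]
    intro d hd
    interval_cases d <;> simp [coeff_C]
  obtain ⟨R, hR⟩ := hdvd
  have hPeq : P = C (Q.coeff 0) + C (Q.coeff 1) * (X - 1)
      + (X - 1) ^ 2 * R.comp (X - 1) := by
    have h1 : P = Q.comp (X - 1) := by
      rw [hQdef, comp_assoc]; simp
    have h2 : Q = C (Q.coeff 0) + C (Q.coeff 1) * X + X ^ 2 * R := by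
      linear_combination hR
    have h3 : Q.comp (X - 1)
        = (C (Q.coeff 0) + C (Q.coeff 1) * X + X ^ 2 * R).comp (X - 1) := by
      conv_lhs => rw [h2]
    rw [h1, h3]
    simp only [add_comp, mul_comp, pow_comp, X_comp, C_comp]
  have hc0 : Q.coeff 0 = P.eval 1 := by
    rw [coeff_zero_eq_eval_zero, hQdef, eval_comp]; simp
  have hcw : C w * C (Q.coeff 0) = 1 := by
    rw [← C_mul, hc0, hw, C_1]
  refine ⟨C w * (1 - C w * C (Q.coeff 1) * (X - 1)),
    C w * R.comp (X - 1) - C w * C w * C (Q.coeff 1) * C (Q.coeff 1)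
      - C w * C w * C (Q.coeff 1) * (X - 1) * R.comp (X - 1), ?_⟩
  linear_combination (C w * (1 - C w * C (Q.coeff 1) * (X - 1))) * hPeq +
    (1 - C w * C (Q.coeff 1) * (X - 1)) * hcw

/-- If a vector is killed by a polynomial in `f` whose value at `1` is a unit, and also by
`(1-f)^2`, then it is zero. -/
private lemma kill_of_unit {k Ω : Type} [CommRing k] [AddCommGroup Ω] [Module k Ω]
    (f : Module.End k Ω) (P : Polynomial k) (x : Ω) (hu : IsUnit (P.eval 1))
    (h0 : Polynomial.aeval f P x = 0)
    (h2 : (((1 : Module.End k Ω) - f) ^ 2) x = 0) : x = 0 := by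
  obtain ⟨V, S, hVS⟩ := my_bezout P hu
  have hfs : (f - (1 : Module.End k Ω)) ^ 2 = ((1 : Module.End k Ω) - f) ^ 2 := by
    noncomm_ring
  have h2' : ((f - (1 : Module.End k Ω)) ^ 2) x = 0 := by rw [hfs]; exact h2
  have happ := congrArg (fun Q : Polynomial k => (Polynomial.aeval f Q) x) hVS
  simp only [map_mul, map_add, map_one, map_pow, map_sub, aeval_X,
    Module.End.mul_apply, LinearMap.add_apply, Module.End.one_apply,
    h0, map_zero, h2', add_zero] at happ
  first
  | exact happ
  | exact happ.symm

/-- Word of one-forms `d(ι a₁) ⋯ d(ι aₙ)`. -/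
private def Wrd {k A Ω : Type} [CommRing k] [Ring A] [Algebra k A] [Ring Ω] [Algebra k Ω]
    (ι : A →ₐ[k] Ω) (d : Ω →ₗ[k] Ω) (L : List A) : Ω :=
  (L.map fun a => d (ι a)).prod

private lemma Wrd_nil {k A Ω : Type} [CommRing k] [Ring A] [Algebra k A] [Ring Ω] [Algebra k Ω]
    (ι : A →ₐ[k] Ω) (d : Ω →ₗ[k] Ω) : Wrd ι d [] = 1 := rfl

private lemma Wrd_cons {k A Ω : Type} [CommRing k] [Ring A] [Algebra k A] [Ring Ω] [Algebra k Ω]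
    (ι : A →ₐ[k] Ω) (d : Ω →ₗ[k] Ω) (a : A) (L : List A) :
    Wrd ι d (a :: L) = d (ι a) * Wrd ι d L := by
  simp [Wrd]

private lemma Wrd_append {k A Ω : Type} [CommRing k] [Ring A] [Algebra k A] [Ring Ω]
    [Algebra k Ω] (ι : A →ₐ[k] Ω) (d : Ω →ₗ[k] Ω) (L M : List A) :
    Wrd ι d (L ++ M) = Wrd ι d L * Wrd ι d M := by
  simp [Wrd]

private lemma Wrd_singleton {k A Ω : Type} [CommRing k] [Ring A] [Algebra k A] [Ring Ω]
    [Algebra k Ω] (ι : A →ₐ[k] Ω) (d : Ω →ₗ[k] Ω) (a : A) :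
    Wrd ι d [a] = d (ι a) := by
  simp [Wrd]

/-- Span of exact words of a given length. -/
private def DGen {k A Ω : Type} [CommRing k] [Ring A] [Algebra k A] [Ring Ω] [Algebra k Ω]
    (ι : A →ₐ[k] Ω) (d : Ω →ₗ[k] Ω) (n : ℕ) : Submodule k Ω :=
  Submodule.span k {w : Ω | ∃ (a : A) (L : List A), L.length = n ∧ w = Wrd ι d (a :: L)}

private lemma DGen_span {k A Ω : Type} [CommRing k] [Ring A] [Algebra k A] [Ring Ω]
    [Algebra k Ω] (ι : A →ₐ[k] Ω) (d : Ω →ₗ[k] Ω) (n : ℕ) :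
    DGen ι d n = Submodule.span k
      {w : Ω | ∃ (a : A) (L : List A), L.length = n ∧ w = Wrd ι d (a :: L)} := rfl

/-- with the Cuntz–Quillen harmonic decomposition on `Ω̄A`, one has
`P⊥ dΩ̄ = (Id−κ) dΩ̄ = [dΩ, dΩ]‾`: the antiharmonic part of the space of exact
noncommutative forms coincides with the span of graded commutators of exact forms. -/
theorem stmt_15 {k A Ω : Type} [CommRing k] [Algebra ℚ k]
    [Ring A] [Algebra k A] [Ring Ω] [Algebra k Ω]
    (ι : A →ₐ[k] Ω) (d : Ω →ₗ[k] Ω) (G : ℕ → Submodule k Ω)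
    (hsplit : ∃ p : A →ₗ[k] k, ∀ c : k, p (algebraMap k A c) = c)
    (hG0 : G 0 = LinearMap.range ι.toLinearMap)
    (hGmul : ∀ m n : ℕ, ∀ x ∈ G m, ∀ y ∈ G n, x * y ∈ G (m + n))
    (hdG : ∀ n : ℕ, ∀ x ∈ G n, d x ∈ G (n + 1))
    (hdd : ∀ x : Ω, d (d x) = 0)
    (hleib : ∀ (m : ℕ) (x : Ω), x ∈ G m → ∀ y : Ω,
      d (x * y) = d x * y + ((-1 : ℤ) ^ m) • (x * d y))
    (hspan : ∀ n : ℕ, G n = Submodule.span k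
      {w : Ω | ∃ a : ℕ → A,
        w = ι (a 0) * (List.ofFn fun i : Fin n => d (ι (a (i.1 + 1)))).prod})
    (hsup : (⨆ n, G n) = ⊤)
    (κ : Module.End k Ω)
    (hκ : ∀ (n : ℕ) (x : Ω), x ∈ G n → ∀ a : A,
      κ (x * d (ι a)) = ((-1 : ℤ) ^ n) • (d (ι a) * x))
    (hκ0 : ∀ a : A, κ (ι a) = 0)
    (hκG : ∀ n : ℕ, ∀ x ∈ G n, κ x ∈ G n)
    (hκpoly : ∀ n : ℕ, ∀ x ∈ G n, ((κ ^ n - 1) * (κ ^ (n + 1) - 1)) x = 0)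
    (Pperp : Module.End k Ω)
    (hPr : ∀ x : Ω, Pperp x ∈ LinearMap.range (((1 : Module.End k Ω) - κ) ^ 2))
    (hPk : ∀ x : Ω, x - Pperp x ∈ LinearMap.ker (((1 : Module.End k Ω) - κ) ^ 2))
    (hPP : ∀ x : Ω, Pperp (Pperp x) = Pperp x)
    (hPG : ∀ n : ℕ, ∀ x ∈ G n, Pperp x ∈ G n) :
    Submodule.map (Pperp : Ω →ₗ[k] Ω) (LinearMap.range d)
        = Submodule.map (((1 : Module.End k Ω) - κ) : Ω →ₗ[k] Ω) (LinearMap.range d) ∧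
    Submodule.map (((1 : Module.End k Ω) - κ) : Ω →ₗ[k] Ω) (LinearMap.range d)
        = Submodule.span k {c : Ω | ∃ (p q : ℕ) (x y : Ω), x ∈ G p ∧ y ∈ G q ∧
            c = d x * d y - ((-1 : ℤ) ^ ((p + 1) * (q + 1))) • (d y * d x)} := by
  clear hsplit hPP hκG hPG
  -- basic membership facts
  have hιmem : ∀ a : A, ι a ∈ G 0 := fun a => hG0 ▸ ⟨a, rfl⟩
  have hone : (1 : Ω) ∈ G 0 := by simpa using hιmem 1
  have hdι : ∀ a : A, d (ι a) ∈ G 1 := fun a => hdG 0 _ (hιmem a)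
  have hWmem : ∀ L : List A, Wrd ι d L ∈ G L.length := by
    intro L
    induction L with
    | nil => simpa [Wrd_nil] using hone
    | cons a L ih =>
      have := hGmul 1 L.length _ (hdι a) _ ih
      simpa [Wrd_cons, Nat.add_comm] using this
  have hd1 : d (1 : Ω) = 0 := by
    have h := hleib 0 1 hone 1
    simpa using h
  have hdW : ∀ L : List A, d (Wrd ι d L) = 0 := by
    intro L
    induction L with
    | nil => simpa [Wrd_nil] using hd1
    | cons a L ih =>
      rw [Wrd_cons, hleib 1 _ (hdι a)]
      simp [hdd, ih]
  have hdgen : ∀ (a : A) (L : List A), d (ι a * Wrd ι d L) = Wrd ι d (a :: L) := by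
    intro a L
    rw [hleib 0 _ (hιmem a), hdW, Wrd_cons]
    simp
  have hκW : ∀ (M : List A) (b : A),
      κ (Wrd ι d (M ++ [b])) = ((-1 : ℤ) ^ M.length) • Wrd ι d (b :: M) := by
    intro M b
    have h := hκ M.length _ (hWmem M) b
    rw [Wrd_append, Wrd_singleton, Wrd_cons]
    exact h
  -- rotation of words under κ
  have hrot : ∀ (S P : List A), (κ ^ S.length) (Wrd ι d (P ++ S))
      = ((-1 : ℤ) ^ ((P.length + S.length - 1) * S.length)) • Wrd ι d (S ++ P) := by
    intro S
    induction S using List.reverseRecOn with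
    | nil => intro P; simp
    | append_singleton S b ih =>
      intro P
      have hassoc : P ++ (S ++ [b]) = (P ++ S) ++ [b] := by simp
      rw [hassoc, List.length_append, List.length_singleton, pow_succ,
        Module.End.mul_apply, hκW, map_zsmul]
      have hcons : (b :: (P ++ S)) = (b :: P) ++ S := rfl
      rw [hcons, ih (b :: P), smul_smul, ← pow_add]
      have hlist : S ++ (b :: P) = (S ++ [b]) ++ P := by simp
      rw [hlist]
      congr 2
      simp only [List.length_append, List.length_cons]
      have h1 : P.length + 1 + S.length - 1 = P.length + S.length := by omega
      have h2 : P.length + (S.length + 1) - 1 = P.length + S.length := by omega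
      rw [h1, h2]
      ring
  have hrotid : ∀ L : List A, (κ ^ L.length) (Wrd ι d L) = Wrd ι d L := by
    intro L
    have h := hrot L []
    simp only [List.nil_append, List.append_nil, List.length_nil, Nat.zero_add] at h
    rw [h]
    have hev : Even ((L.length - 1) * L.length) := by
      rcases L with _ | ⟨a, L'⟩
      · simp
      · simpa [List.length_cons, Nat.mul_comm] using Nat.even_mul_succ_self L'.length
    rw [hev.neg_one_pow, one_smul]
  -- the submodules of exact words
  have hgenmem : ∀ (a : A) (L : List A), Wrd ι d (a :: L) ∈ DGen ι d L.length :=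
    fun a L => Submodule.subset_span ⟨a, L, rfl, rfl⟩
  have hofn : ∀ (n : ℕ) (a : ℕ → A),
      (List.ofFn fun i : Fin n => d (ι (a (i.1 + 1)))).prod
        = Wrd ι d (List.ofFn fun i : Fin n => a (i.1 + 1)) := by
    intro n a
    simp only [Wrd, List.map_ofFn]
    rfl
  have hmapd : ∀ n : ℕ, Submodule.map d (G n) = DGen ι d n := by
    intro n
    apply le_antisymm
    · rw [hspan n, Submodule.map_span_le]
      rintro w ⟨a, rfl⟩
      rw [hofn, hdgen]
      have := hgenmem (a 0) (List.ofFn fun i : Fin n => a (i.1 + 1))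
      simpa [List.length_ofFn] using this
    · rw [DGen_span, Submodule.span_le]
      rintro w ⟨a, L, hlen, rfl⟩
      refine ⟨ι a * Wrd ι d L, ?_, hdgen a L⟩
      have := hGmul 0 n _ (hιmem a) _ (hlen ▸ hWmem L)
      simpa using this
  have hrange : LinearMap.range d = ⨆ n, DGen ι d n := by
    conv_lhs => rw [← Submodule.map_top, ← hsup]
    rw [Submodule.map_iSup]
    exact iSup_congr hmapd
  have hDGle : ∀ n, DGen ι d n ≤ LinearMap.range d := by
    intro n
    rw [hrange]
    exact le_iSup _ n
  have hκDG : ∀ n, ∀ x ∈ DGen ι d n, κ x ∈ DGen ι d n := by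
    intro n
    have hle : DGen ι d n ≤ Submodule.comap (κ : Ω →ₗ[k] Ω) (DGen ι d n) := by
      rw [DGen_span, Submodule.span_le]
      rintro w ⟨a, L, hlen, rfl⟩
      obtain ⟨M, b, hMb⟩ := (a :: L).eq_nil_or_concat'.resolve_left (by simp)
      have hMlen : M.length = n := by
        have := congrArg List.length hMb
        simp at this
        omega
      have : κ (Wrd ι d (a :: L)) ∈ DGen ι d n := by
        rw [hMb, hκW]
        refine zsmul_mem ?_ _
        rw [← hMlen]
        exact hgenmem b M
      exact this
    exact fun x hx => hle hx
  have hκpowDG : ∀ n (i : ℕ), ∀ x ∈ DGen ι d n, (κ ^ i) x ∈ DGen ι d n := by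
    intro n i
    induction i with
    | zero => intro x hx; simpa using hx
    | succ i ih =>
      intro x hx
      rw [pow_succ, Module.End.mul_apply]
      exact ih _ (hκDG n x hx)
  have hTDG : ∀ n, ∀ x ∈ DGen ι d n, ((1 : Module.End k Ω) - κ) x ∈ DGen ι d n := by
    intro n x hx
    rw [LinearMap.sub_apply, Module.End.one_apply]
    exact Submodule.sub_mem _ hx (hκDG n x hx)
  have hκN : ∀ n, ∀ y ∈ DGen ι d n, (κ ^ (n + 1)) y = y := by
    intro n
    have hle : DGen ι d n ≤ LinearMap.ker (κ ^ (n + 1) - 1) := by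
      rw [DGen_span, Submodule.span_le]
      rintro w ⟨a, L, hlen, rfl⟩
      have hL := hrotid (a :: L)
      rw [List.length_cons, hlen] at hL
      simp only [SetLike.mem_coe, LinearMap.mem_ker, LinearMap.sub_apply, Module.End.one_apply]
      rw [sub_eq_zero]
      exact hL
    intro y hy
    have h := hle hy
    rw [LinearMap.mem_ker, LinearMap.sub_apply, Module.End.one_apply, sub_eq_zero] at h
    exact h
  -- geometric series identity for operators
  have hgeomT : ∀ j : ℕ, ((1 : Module.End k Ω) - κ) * (∑ i ∈ Finset.range j, κ ^ i)
      = 1 - κ ^ j := by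
    intro j
    have h2 := mul_geom_sum κ j
    calc ((1 : Module.End k Ω) - κ) * (∑ i ∈ Finset.range j, κ ^ i)
        = -((κ - 1) * ∑ i ∈ Finset.range j, κ ^ i) := by rw [sub_mul, sub_mul, one_mul, neg_sub]
      _ = -(κ ^ j - 1) := by rw [h2]
      _ = 1 - κ ^ j := by noncomm_ring
  -- harmonic decomposition within DGen n
  have hAB : ∀ n (y : Ω), y ∈ DGen ι d n → ∃ h v : Ω,
      ((1 : Module.End k Ω) - κ) h = 0 ∧ v ∈ DGen ι d n ∧
      y = h + ((1 : Module.End k Ω) - κ) v := by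
    intro n y hy
    set N := n + 1 with hN
    set c : k := algebraMap ℚ k ((N : ℚ))⁻¹ with hc
    have hcN : ∀ v : Ω, c • ((N : ℕ) • v) = v := by
      intro v
      rw [← Nat.cast_smul_eq_nsmul (R := k), smul_smul]
      have hNu : c * ((N : ℕ) : k) = 1 := by
        rw [hc, show (((N : ℕ)) : k) = algebraMap ℚ k ((N : ℕ) : ℚ) from
          (map_natCast (algebraMap ℚ k) N).symm, ← map_mul,
          inv_mul_cancel₀ (Nat.cast_ne_zero.mpr (by omega)), map_one]
      rw [hNu, one_smul]
    set z : Ω := ∑ j ∈ Finset.range N, (∑ i ∈ Finset.range j, κ ^ i) y with hzdef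
    have hz : z ∈ DGen ι d n := by
      rw [hzdef]
      refine Submodule.sum_mem _ fun j _ => ?_
      rw [LinearMap.sum_apply]
      exact Submodule.sum_mem _ fun i _ => hκpowDG n i y hy
    have hTz : ((1 : Module.End k Ω) - κ) z
        = (N : ℕ) • y - (∑ j ∈ Finset.range N, (κ ^ j) y) := by
      rw [hzdef, map_sum]
      have hterm : ∀ j ∈ Finset.range N,
          ((1 : Module.End k Ω) - κ) ((∑ i ∈ Finset.range j, κ ^ i) y)
            = y - (κ ^ j) y := by
        intro j _
        rw [← Module.End.mul_apply, hgeomT, LinearMap.sub_apply, Module.End.one_apply]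
      rw [Finset.sum_congr rfl hterm, Finset.sum_sub_distrib, Finset.sum_const,
        Finset.card_range]
    have hTsum : ((1 : Module.End k Ω) - κ) ((∑ j ∈ Finset.range N, κ ^ j) y) = 0 := by
      rw [← Module.End.mul_apply, hgeomT, LinearMap.sub_apply, Module.End.one_apply,
        hκN n y hy, sub_self]
    refine ⟨c • ((∑ j ∈ Finset.range N, κ ^ j) y), c • z, ?_, Submodule.smul_mem _ c hz, ?_⟩
    · rw [map_smul, hTsum, smul_zero]
    · rw [map_smul, hTz, smul_sub, hcN, LinearMap.sum_apply]
      abel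
  -- the annihilating polynomial for antiharmonic parts
  have hpoly : ∀ x : Ω, ∃ P : Polynomial k, IsUnit (P.eval 1) ∧
      (Polynomial.aeval κ P) ((((1 : Module.End k Ω) - κ) ^ 2) x) = 0 := by
    intro x
    have hx : x ∈ ⨆ n, G n := by rw [hsup]; exact Submodule.mem_top
    refine Submodule.iSup_induction (motive := fun u : Ω => ∃ P : Polynomial k,
      IsUnit (P.eval 1) ∧
        (Polynomial.aeval κ P) ((((1 : Module.End k Ω) - κ) ^ 2) u) = 0) G hx ?_ ?_ ?_
    · intro n x hxn
      rcases n with _ | m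
      · refine ⟨X, by simp, ?_⟩
        rw [hG0] at hxn
        obtain ⟨a, rfl⟩ := hxn
        rw [aeval_X]
        have hcomm : κ * (((1 : Module.End k Ω) - κ) ^ 2)
            = (((1 : Module.End k Ω) - κ) ^ 2) * κ :=
            (((Commute.one_right κ).sub_right (Commute.refl κ)).pow_right 2).eq
        rw [← Module.End.mul_apply, hcomm, Module.End.mul_apply]
        have hka : κ (ι.toLinearMap a) = 0 := hκ0 a
        rw [hka, map_zero]
      · refine ⟨(∑ i ∈ Finset.range (m + 1), X ^ i) * (∑ i ∈ Finset.range (m + 2), X ^ i),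
          ?_, ?_⟩
        · have heval : (((∑ i ∈ Finset.range (m + 1), (X : Polynomial k) ^ i)
              * (∑ i ∈ Finset.range (m + 2), X ^ i)).eval 1)
              = ((m + 1 : ℕ) : k) * ((m + 2 : ℕ) : k) := by
            simp [eval_finset_sum]
          rw [heval]
          have hu1 : IsUnit (((m + 1 : ℕ) : k)) := by
            have hne : (((m + 1 : ℕ)) : ℚ) ≠ 0 := by exact_mod_cast Nat.succ_ne_zero m
            have := (isUnit_iff_ne_zero.mpr hne).map (algebraMap ℚ k)
            rwa [map_natCast] at this
          have hu2 : IsUnit (((m + 2 : ℕ) : k)) := by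
            have hne : (((m + 2 : ℕ)) : ℚ) ≠ 0 := by exact_mod_cast Nat.succ_ne_zero (m + 1)
            have := (isUnit_iff_ne_zero.mpr hne).map (algebraMap ℚ k)
            rwa [map_natCast] at this
          exact hu1.mul hu2
        · have hid : ((∑ i ∈ Finset.range (m + 1), (X : Polynomial k) ^ i)
              * (∑ i ∈ Finset.range (m + 2), X ^ i)) * (1 - X) ^ 2
              = (X ^ (m + 1) - 1) * (X ^ (m + 2) - 1) := by
            have g1 := geom_sum_mul (X : Polynomial k) (m + 1)
            have g2 := geom_sum_mul (X : Polynomial k) (m + 2)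
            linear_combination (∑ i ∈ Finset.range (m + 2), (X : Polynomial k) ^ i)
              * ((X : Polynomial k) - 1) * g1 + ((X : Polynomial k) ^ (m + 1) - 1) * g2
          have hTval : (((1 : Module.End k Ω) - κ) ^ 2) x
              = (Polynomial.aeval κ ((1 - X : Polynomial k) ^ 2)) x := by
            rw [map_pow, map_sub, map_one, aeval_X]
          rw [hTval, ← Module.End.mul_apply, ← map_mul, hid]
          have := hκpoly (m + 1) x hxn
          simpa only [map_mul, map_sub, map_one, map_pow, aeval_X] using this
    · exact ⟨1, by simp, by simp⟩
    · rintro x y ⟨P1, hu1, hP1⟩ ⟨P2, hu2, hP2⟩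
      refine ⟨P1 * P2, by rw [eval_mul]; exact hu1.mul hu2, ?_⟩
      have hadd : (((1 : Module.End k Ω) - κ) ^ 2) (x + y)
          = (((1 : Module.End k Ω) - κ) ^ 2) x + (((1 : Module.End k Ω) - κ) ^ 2) y :=
        map_add _ _ _
      rw [hadd, map_add]
      have e1 : (Polynomial.aeval κ (P1 * P2)) ((((1 : Module.End k Ω) - κ) ^ 2) x) = 0 := by
        rw [show P1 * P2 = P2 * P1 from mul_comm _ _, map_mul, Module.End.mul_apply, hP1,
          map_zero]
      have e2 : (Polynomial.aeval κ (P1 * P2)) ((((1 : Module.End k Ω) - κ) ^ 2) y) = 0 := by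
        rw [map_mul, Module.End.mul_apply, hP2, map_zero]
      rw [e1, e2, add_zero]
  -- uniqueness facts about Pperp
  have hzero : ∀ z : Ω, z ∈ LinearMap.range (((1 : Module.End k Ω) - κ) ^ 2) →
      (((1 : Module.End k Ω) - κ) ^ 2) z = 0 → z = 0 := by
    rintro z ⟨s, rfl⟩ h2
    obtain ⟨P, hu, hP⟩ := hpoly s
    exact kill_of_unit κ P _ hu hP h2
  have hPid : ∀ w : Ω, Pperp ((((1 : Module.End k Ω) - κ) ^ 2) w)
      = (((1 : Module.End k Ω) - κ) ^ 2) w := by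
    intro w
    set z := (((1 : Module.End k Ω) - κ) ^ 2) w with hz
    have h1 := hPk z
    rw [LinearMap.mem_ker] at h1
    have h2 : z - Pperp z ∈ LinearMap.range (((1 : Module.End k Ω) - κ) ^ 2) :=
      Submodule.sub_mem _ ⟨w, hz.symm⟩ (hPr z)
    have h3 := hzero _ h2 h1
    exact (sub_eq_zero.mp h3).symm
  have hP0 : ∀ x : Ω, (((1 : Module.End k Ω) - κ) ^ 2) x = 0 → Pperp x = 0 := by
    intro x hx
    have h1 := hPk x
    rw [LinearMap.mem_ker, map_sub, hx, zero_sub, neg_eq_zero] at h1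
    exact hzero _ (hPr x) h1
  have hTsq : ∀ u : Ω, (((1 : Module.End k Ω) - κ) ^ 2) u
      = ((1 : Module.End k Ω) - κ) (((1 : Module.End k Ω) - κ) u) := by
    intro u
    rw [pow_two, Module.End.mul_apply]
  have hA : ∀ n (y : Ω), y ∈ DGen ι d n → ∃ w ∈ DGen ι d n,
      ((1 : Module.End k Ω) - κ) y = (((1 : Module.End k Ω) - κ) ^ 2) w := by
    intro n y hy
    obtain ⟨h, v, hh, hv, hyeq⟩ := hAB n y hy
    refine ⟨v, hv, ?_⟩
    rw [hyeq, map_add, hh, zero_add, hTsq]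
  have hprojDG : ∀ n (y : Ω), y ∈ DGen ι d n → ∃ w ∈ DGen ι d n,
      Pperp y = (((1 : Module.End k Ω) - κ) ^ 2) w := by
    intro n y hy
    obtain ⟨h, v, hh, hv, hyeq⟩ := hAB n y hy
    obtain ⟨w, hw, hTv⟩ := hA n v hv
    refine ⟨w, hw, ?_⟩
    have hPh : Pperp h = 0 := hP0 h (by rw [hTsq, hh, map_zero])
    rw [hyeq, map_add, hTv, hPid, hPh, zero_add]
  -- Part 1
  have goal1a : Submodule.map (Pperp : Ω →ₗ[k] Ω) (LinearMap.range d)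
      ≤ Submodule.map (((1 : Module.End k Ω) - κ) : Ω →ₗ[k] Ω) (LinearMap.range d) := by
    conv_lhs => rw [hrange]
    rw [Submodule.map_iSup]
    apply iSup_le
    intro n w hw
    obtain ⟨y, hy, rfl⟩ := hw
    obtain ⟨v, hv, hPy⟩ := hprojDG n y hy
    rw [hPy, hTsq]
    exact Submodule.mem_map_of_mem (hDGle n (hTDG n v hv))
  have goal1b : Submodule.map (((1 : Module.End k Ω) - κ) : Ω →ₗ[k] Ω) (LinearMap.range d)
      ≤ Submodule.map (Pperp : Ω →ₗ[k] Ω) (LinearMap.range d) := by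
    conv_lhs => rw [hrange]
    rw [Submodule.map_iSup]
    apply iSup_le
    intro n w hw
    obtain ⟨y, hy, rfl⟩ := hw
    obtain ⟨v, hv, hTy⟩ := hA n y hy
    rw [hTy]
    refine ⟨(((1 : Module.End k Ω) - κ) ^ 2) v, ?_, hPid v⟩
    refine hDGle n ?_
    rw [hTsq]
    exact hTDG n _ (hTDG n v hv)
  -- Part 2, inclusion of commutators
  have hword : ∀ (pp qq : ℕ) (a b : A) (L M2 : List A), L.length = pp → M2.length = qq →
      Wrd ι d ((a :: L) ++ (b :: M2))
        - ((-1 : ℤ) ^ ((pp + 1) * (qq + 1))) • Wrd ι d ((b :: M2) ++ (a :: L))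
      ∈ Submodule.map (((1 : Module.End k Ω) - κ) : Ω →ₗ[k] Ω) (LinearMap.range d) := by
    intro pp qq a b L M2 hL hM
    have hXlen : (a :: L).length = pp + 1 := by simp [hL]
    have hYlen : (b :: M2).length = qq + 1 := by simp [hM]
    have hWmemD : Wrd ι d ((a :: L) ++ (b :: M2)) ∈ DGen ι d (pp + qq + 1) := by
      have hc : (a :: L) ++ (b :: M2) = a :: (L ++ (b :: M2)) := rfl
      rw [hc]
      have hlen2 : (L ++ (b :: M2)).length = pp + qq + 1 := by
        simp [hL, hM]; omega
      have := hgenmem a (L ++ (b :: M2))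
      rwa [hlen2] at this
    have humem : (∑ i ∈ Finset.range (qq + 1), κ ^ i) (Wrd ι d ((a :: L) ++ (b :: M2)))
        ∈ DGen ι d (pp + qq + 1) := by
      rw [LinearMap.sum_apply]
      exact Submodule.sum_mem _ fun i _ => hκpowDG _ i _ hWmemD
    refine ⟨(∑ i ∈ Finset.range (qq + 1), κ ^ i) (Wrd ι d ((a :: L) ++ (b :: M2))),
      hDGle _ humem, ?_⟩
    rw [← Module.End.mul_apply, hgeomT, LinearMap.sub_apply, Module.End.one_apply]
    have hrotY := hrot (b :: M2) (a :: L)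
    rw [hYlen] at hrotY
    rw [hrotY, hXlen]
    congr 2
    have he1 : (pp + 1 + (qq + 1) - 1) * (qq + 1) = (pp + 1) * (qq + 1) + qq * (qq + 1) := by
      have : pp + 1 + (qq + 1) - 1 = pp + 1 + qq := by omega
      rw [this]; ring
    rw [he1, pow_add, (Nat.even_mul_succ_self qq).neg_one_pow, mul_one]
  have hbil : ∀ (pp qq : ℕ) (x y : Ω), x ∈ G pp → y ∈ G qq →
      d x * d y - ((-1 : ℤ) ^ ((pp + 1) * (qq + 1))) • (d y * d x)
        ∈ Submodule.map (((1 : Module.End k Ω) - κ) : Ω →ₗ[k] Ω) (LinearMap.range d) := by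
    intro pp qq x y hx hy
    rw [hspan pp] at hx
    rw [hspan qq] at hy
    induction hx using Submodule.span_induction with
    | mem x hxs =>
      induction hy using Submodule.span_induction with
      | mem y hys =>
        obtain ⟨ax, rfl⟩ := hxs
        obtain ⟨ay, rfl⟩ := hys
        rw [hofn, hofn, hdgen, hdgen, ← Wrd_append, ← Wrd_append]
        exact hword pp qq (ax 0) (ay 0) _ _ List.length_ofFn List.length_ofFn
      | zero =>
        simp only [map_zero, mul_zero, zero_mul, smul_zero, sub_zero]
        exact zero_mem _
      | add y1 y2 hy1 hy2 ih1 ih2 =>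
        have heq : d x * d (y1 + y2)
            - ((-1 : ℤ) ^ ((pp + 1) * (qq + 1))) • (d (y1 + y2) * d x)
            = (d x * d y1 - ((-1 : ℤ) ^ ((pp + 1) * (qq + 1))) • (d y1 * d x))
              + (d x * d y2 - ((-1 : ℤ) ^ ((pp + 1) * (qq + 1))) • (d y2 * d x)) := by
          rw [map_add, mul_add (d x) (d y1) (d y2), add_mul (d y1) (d y2) (d x),
            smul_add]
          abel
        rw [heq]
        exact add_mem ih1 ih2
      | smul aa y1 hy1 ih =>
        have heq : d x * d (aa • y1)
            - ((-1 : ℤ) ^ ((pp + 1) * (qq + 1))) • (d (aa • y1) * d x)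
            = aa • (d x * d y1 - ((-1 : ℤ) ^ ((pp + 1) * (qq + 1))) • (d y1 * d x)) := by
          rw [map_smul, mul_smul_comm, smul_mul_assoc,
            smul_comm ((-1 : ℤ) ^ ((pp + 1) * (qq + 1))) aa, smul_sub]
        rw [heq]
        exact Submodule.smul_mem _ aa ih
    | zero =>
      simp only [map_zero, mul_zero, zero_mul, smul_zero, sub_zero]
      exact zero_mem _
    | add x1 x2 hx1 hx2 ih1 ih2 =>
      have heq : d (x1 + x2) * d y
          - ((-1 : ℤ) ^ ((pp + 1) * (qq + 1))) • (d y * d (x1 + x2))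
          = (d x1 * d y - ((-1 : ℤ) ^ ((pp + 1) * (qq + 1))) • (d y * d x1))
            + (d x2 * d y - ((-1 : ℤ) ^ ((pp + 1) * (qq + 1))) • (d y * d x2)) := by
        rw [map_add, add_mul (d x1) (d x2) (d y), mul_add (d y) (d x1) (d x2),
          smul_add]
        abel
      rw [heq]
      exact add_mem ih1 ih2
    | smul aa x1 hx1 ih =>
      have heq : d (aa • x1) * d y
          - ((-1 : ℤ) ^ ((pp + 1) * (qq + 1))) • (d y * d (aa • x1))
          = aa • (d x1 * d y - ((-1 : ℤ) ^ ((pp + 1) * (qq + 1))) • (d y * d x1)) := by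
        rw [map_smul, smul_mul_assoc, mul_smul_comm,
          smul_comm ((-1 : ℤ) ^ ((pp + 1) * (qq + 1))) aa, smul_sub]
      rw [heq]
      exact Submodule.smul_mem _ aa ih
  have goal2b : Submodule.span k {c : Ω | ∃ (p q : ℕ) (x y : Ω), x ∈ G p ∧ y ∈ G q ∧
        c = d x * d y - ((-1 : ℤ) ^ ((p + 1) * (q + 1))) • (d y * d x)}
      ≤ Submodule.map (((1 : Module.End k Ω) - κ) : Ω →ₗ[k] Ω) (LinearMap.range d) := by
    rw [Submodule.span_le]
    rintro c ⟨p, q, x, y, hx, hy, rfl⟩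
    exact hbil p q x y hx hy
  have goal2a : Submodule.map (((1 : Module.End k Ω) - κ) : Ω →ₗ[k] Ω) (LinearMap.range d)
      ≤ Submodule.span k {c : Ω | ∃ (p q : ℕ) (x y : Ω), x ∈ G p ∧ y ∈ G q ∧
        c = d x * d y - ((-1 : ℤ) ^ ((p + 1) * (q + 1))) • (d y * d x)} := by
    conv_lhs => rw [hrange]
    rw [Submodule.map_iSup]
    apply iSup_le
    intro n
    rw [DGen_span, Submodule.map_span_le]
    rintro w ⟨a, L, hlen, rfl⟩
    obtain ⟨M, b, hMb⟩ := (a :: L).eq_nil_or_concat'.resolve_left (by simp)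
    rw [hMb, LinearMap.sub_apply, Module.End.one_apply, hκW]
    rcases M with _ | ⟨a', L'⟩
    · simp only [List.nil_append, List.length_nil, pow_zero, one_smul, sub_self]
      exact zero_mem _
    · apply Submodule.subset_span
      refine ⟨L'.length, 0, ι a' * Wrd ι d L', ι b, ?_, hιmem b, ?_⟩
      · have := hGmul 0 L'.length _ (hιmem a') _ (hWmem L')
        simpa using this
      · rw [hdgen, Wrd_append, Wrd_singleton]
        simp [Wrd_cons, List.length_cons]
  exact ⟨le_antisymm goal1a goal1b, le_antisymm goal2a goal2b⟩
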